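/- Uniform bounds near c = 1: for k ≥ 0 and (1-e^k)^+ ≤ c < 1, -2·Φ^{-1}((1-c)/2) ≤ Y_BS(k,c) ≤ -2·Φ^{-1}((1-c)/(1+e^k)). -/

import Mathlib

open MeasureTheory Real Filter Asymptotics Set
open Topology

/-- Standard normal density. -/
noncomputable def phi (z : ℝ) : ℝ := (Real.sqrt (2 * Real.pi))⁻¹ * Real.exp (-z ^ 2 / 2)

/-- Standard normal CDF. -/
noncomputable def Phi (x : ℝ) : ℝ := ∫ z in Set.Iic x, phi z

/-- Black–Scholes normalized call price. -/
noncomputable def CBS (k y : ℝ) : ℝ :=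
  if 0 < y then Phi (-k / y + y / 2) - Real.exp k * Phi (-k / y - y / 2)
  else max (1 - Real.exp k) 0

/-- Implied total standard deviation: inverse of `CBS k` on `[0,∞)`. -/
noncomputable def YBS (k c : ℝ) : ℝ := sInf {y : ℝ | 0 ≤ y ∧ CBS k y = c}

/-- Inverse of the standard normal CDF on (0,1). -/
noncomputable def PhiInv (u : ℝ) : ℝ := sInf {x : ℝ | u ≤ Phi x}

/-- Extended-real quantile with the convention `Φ⁻¹(u) = +∞` for `u ≥ 1`, `-∞` for `u ≤ 0`. -/
noncomputable def PhiInvE (u : ℝ) : EReal :=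
  if 1 ≤ u then ⊤ else if u ≤ 0 then ⊥ else ((PhiInv u : ℝ) : EReal)

lemma phi_pos (z : ℝ) : 0 < phi z :=
  mul_pos (inv_pos.2 (Real.sqrt_pos.2 (by positivity))) (Real.exp_pos _)

lemma continuous_phi : Continuous phi := by
  unfold phi; fun_prop

lemma integrable_phi : Integrable phi := by
  have h : phi = fun z => (Real.sqrt (2 * Real.pi))⁻¹ * Real.exp (-(1/2) * z ^ 2) := by
    funext z; unfold phi; congr 1; ring
  rw [h]
  exact (integrable_exp_neg_mul_sq (by norm_num)).const_mul _

lemma integral_phi : ∫ z, phi z = 1 := by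
  have h : ∫ z, phi z = (Real.sqrt (2 * Real.pi))⁻¹ * ∫ z : ℝ, Real.exp (-(1/2) * z ^ 2) := by
    rw [← integral_const_mul]
    congr 1 with z; unfold phi; congr 1; ring
  rw [h, integral_gaussian, show (Real.pi / (1/2)) = 2 * Real.pi by ring]
  exact inv_mul_cancel₀ (Real.sqrt_ne_zero'.mpr (by positivity))

lemma Phi_sub_Phi (a b : ℝ) : Phi b - Phi a = ∫ z in a..b, phi z :=
  intervalIntegral.integral_Iic_sub_Iic integrable_phi.integrableOn integrable_phi.integrableOn

lemma strictMono_Phi : StrictMono Phi := by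
  intro a b hab
  have h : 0 < ∫ z in a..b, phi z :=
    intervalIntegral.intervalIntegral_pos_of_pos (integrable_phi.intervalIntegrable)
      phi_pos hab
  have := Phi_sub_Phi a b
  linarith

lemma Phi_nonneg (x : ℝ) : 0 ≤ Phi x :=
  setIntegral_nonneg measurableSet_Iic fun z _ => (phi_pos z).le

lemma Phi_pos (x : ℝ) : 0 < Phi x := by
  have h := Phi_sub_Phi (x - 1) x
  have h2 : 0 < ∫ z in (x-1)..x, phi z :=
    intervalIntegral.intervalIntegral_pos_of_pos (integrable_phi.intervalIntegrable)
      phi_pos (by linarith)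
  have := Phi_nonneg (x - 1)
  linarith

lemma Phi_add_Ioi (x : ℝ) : Phi x + ∫ z in Ioi x, phi z = 1 := by
  rw [Phi, intervalIntegral.integral_Iic_add_Ioi integrable_phi.integrableOn integrable_phi.integrableOn,
    integral_phi]

lemma phi_neg (z : ℝ) : phi (-z) = phi z := by unfold phi; rw [neg_pow]; norm_num

lemma Phi_neg (x : ℝ) : Phi (-x) = 1 - Phi x := by
  have h : Phi (-x) = ∫ z in Ioi x, phi z := by
    rw [Phi, ← integral_comp_neg_Ioi]
    simp_rw [phi_neg]
  have := Phi_add_Ioi x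
  linarith

lemma Phi_zero : Phi 0 = 1/2 := by
  have := Phi_neg 0
  rw [neg_zero] at this
  linarith

lemma hasDerivAt_Phi (x : ℝ) : HasDerivAt Phi (phi x) x := by
  have h : ∀ y, Phi y = Phi 0 + ∫ z in (0:ℝ)..y, phi z := fun y => by
    rw [← Phi_sub_Phi]; ring
  have hd : HasDerivAt (fun y => Phi 0 + ∫ z in (0:ℝ)..y, phi z) (phi x) x := by
    refine HasDerivAt.const_add _ ?_
    exact intervalIntegral.integral_hasDerivAt_right (integrable_phi.intervalIntegrable)
      (continuous_phi.stronglyMeasurable.stronglyMeasurableAtFilter)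
      continuous_phi.continuousAt
  exact hd.congr_of_eventuallyEq (Filter.Eventually.of_forall h)

@[fun_prop] lemma continuous_Phi : Continuous Phi :=
  continuous_iff_continuousAt.mpr fun x => (hasDerivAt_Phi x).continuousAt

lemma tendsto_Phi_atTop : Tendsto Phi atTop (𝓝 1) := by
  have h : Tendsto (fun x => Phi 0 + ∫ z in (0:ℝ)..x, phi z) atTop
      (𝓝 (Phi 0 + ∫ z in Ioi (0:ℝ), phi z)) :=
    tendsto_const_nhds.add
      (intervalIntegral_tendsto_integral_Ioi 0 integrable_phi.integrableOn tendsto_id)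
  have heq : (fun x => Phi 0 + ∫ z in (0:ℝ)..x, phi z) = Phi := by
    funext y; rw [← Phi_sub_Phi]; ring
  rw [heq] at h
  rwa [Phi_add_Ioi 0] at h

lemma tendsto_Phi_atBot : Tendsto Phi atBot (𝓝 0) := by
  have h : Tendsto (fun x => Phi 0 - ∫ z in x..(0:ℝ), phi z) atBot
      (𝓝 (Phi 0 - ∫ z in Iic (0:ℝ), phi z)) :=
    tendsto_const_nhds.sub
      (intervalIntegral_tendsto_integral_Iic 0 integrable_phi.integrableOn tendsto_id)
  have heq : (fun x => Phi 0 - ∫ z in x..(0:ℝ), phi z) = Phi := by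
    funext y; rw [← Phi_sub_Phi]; ring
  rw [heq] at h
  have : Phi 0 - ∫ z in Iic (0:ℝ), phi z = 0 := by rw [← Phi]; ring
  rwa [this] at h

lemma phi_identity {k y : ℝ} (hy : y ≠ 0) :
    Real.exp k * phi (-k/y - y/2) = phi (-k/y + y/2) := by
  unfold phi
  rw [← mul_assoc, mul_comm (Real.exp k), mul_assoc, ← Real.exp_add]
  congr 2
  field_simp
  ring

lemma hasDerivAt_F {y : ℝ} (hy : 0 < y) (κ : ℝ) :
    HasDerivAt (fun k => Phi (-k/y + y/2) - Real.exp k * Phi (-k/y - y/2))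
      (-(Real.exp κ * Phi (-κ/y - y/2))) κ := by
  have h1 : HasDerivAt (fun k : ℝ => -k/y + y/2) (-1/y) κ := by
    simpa using (((hasDerivAt_id κ).neg.div_const y).add_const (y/2))
  have h2 : HasDerivAt (fun k : ℝ => -k/y - y/2) (-1/y) κ := by
    simpa using (((hasDerivAt_id κ).neg.div_const y).sub_const (y/2))
  have H1 : HasDerivAt (fun k : ℝ => Phi (-k/y + y/2)) (phi (-κ/y + y/2) * (-1/y)) κ :=
    (hasDerivAt_Phi _).comp κ h1
  have H2 : HasDerivAt (fun k : ℝ => Phi (-k/y - y/2)) (phi (-κ/y - y/2) * (-1/y)) κ :=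
    (hasDerivAt_Phi _).comp κ h2
  have H3 : HasDerivAt (fun k : ℝ => Real.exp k * Phi (-k/y - y/2))
      (Real.exp κ * Phi (-κ/y - y/2) + Real.exp κ * (phi (-κ/y - y/2) * (-1/y))) κ :=
    (Real.hasDerivAt_exp κ).mul H2
  have H := H1.sub H3
  refine H.congr_deriv ?_
  have hid := phi_identity (k := κ) hy.ne'
  have h3 : Real.exp κ * (phi (-κ/y - y/2) * (-1/y)) = phi (-κ/y + y/2) * (-1/y) := by
    rw [← hid]; ring
  rw [h3]; ring

lemma CBS_pos_eq {k y : ℝ} (hy : 0 < y) :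
    CBS k y = Phi (-k/y + y/2) - Real.exp k * Phi (-k/y - y/2) := by
  simp [CBS, hy]

lemma CBS_zero {k : ℝ} (hk : 0 ≤ k) : CBS k 0 = 0 := by
  simp only [CBS, lt_irrefl, if_false]
  have : (1:ℝ) ≤ Real.exp k := Real.one_le_exp hk
  have h : 1 - Real.exp k ≤ 0 := by linarith
  simp [max_eq_right h]

lemma CBS_le {k y : ℝ} (hk : 0 ≤ k) (hy : 0 < y) :
    CBS k y ≤ 1 - 2 * Phi (-(y/2)) := by
  set F : ℝ → ℝ := fun k => Phi (-k/y + y/2) - Real.exp k * Phi (-k/y - y/2) with hF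
  have hmono : Antitone F := by
    refine antitone_of_deriv_nonpos (fun x => (hasDerivAt_F hy x).differentiableAt) ?_
    intro x
    rw [(hasDerivAt_F hy x).deriv]
    have h1 := Phi_nonneg (-x/y - y/2)
    have h2 := Real.exp_pos x
    nlinarith
  have h0 : F 0 = 1 - 2 * Phi (-(y/2)) := by
    have e1 : -(0:ℝ)/y + y/2 = -(-(y/2)) := by ring
    have e2 : -(0:ℝ)/y - y/2 = -(y/2) := by ring
    simp only [hF, e1, e2, Phi_neg, Real.exp_zero, one_mul]
    ring
  have := hmono hk
  rw [CBS_pos_eq hy, ← h0]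
  exact this

lemma le_CBS {k y : ℝ} (hk : 0 ≤ k) (hy : 0 < y) :
    1 - (1 + Real.exp k) * Phi (-(y/2)) ≤ CBS k y := by
  set H : ℝ → ℝ := fun k => (Phi (-k/y + y/2) - Real.exp k * Phi (-k/y - y/2))
      + (1 + Real.exp k) * Phi (-(y/2)) with hH
  have hder : ∀ x : ℝ, HasDerivAt H
      (-(Real.exp x * Phi (-x/y - y/2)) + Real.exp x * Phi (-(y/2))) x := by
    intro x
    exact (hasDerivAt_F hy x).add
      (((Real.hasDerivAt_exp x).const_add 1).mul_const (Phi (-(y/2))))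
  have hmono : MonotoneOn H (Ici 0) := by
    refine monotoneOn_of_deriv_nonneg (convex_Ici 0)
      (fun x _ => ((hder x).differentiableAt).continuousAt.continuousWithinAt)
      (fun x _ => ((hder x).differentiableAt).differentiableWithinAt) ?_
    intro x hx
    rw [interior_Ici] at hx
    rw [(hder x).deriv]
    have hle : -x/y - y/2 ≤ -(y/2) := by
      have h1 : 0 < x/y := div_pos hx hy
      have h2 : -x/y = -(x/y) := by ring
      rw [h2]; linarith
    have := strictMono_Phi.monotone hle
    nlinarith [Real.exp_pos x]
  have h0 : H 0 = 1 := by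
    have e1 : -(0:ℝ)/y + y/2 = -(-(y/2)) := by ring
    have e2 : -(0:ℝ)/y - y/2 = -(y/2) := by ring
    simp only [hH, e1, e2, Phi_neg, Real.exp_zero, one_mul]
    ring
  have h := hmono (self_mem_Ici) hk hk
  rw [h0] at h
  rw [CBS_pos_eq hy]
  have : H k = (Phi (-k/y + y/2) - Real.exp k * Phi (-k/y - y/2))
      + (1 + Real.exp k) * Phi (-(y/2)) := rfl
  linarith [this ▸ h]

lemma tendsto_CBS_zero {k : ℝ} (hk : 0 ≤ k) :
    Tendsto (CBS k) (𝓝[>] 0) (𝓝 0) := by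
  have hcong : (fun y : ℝ => Phi (-k/y + y/2) - Real.exp k * Phi (-k/y - y/2))
      =ᶠ[𝓝[>] (0:ℝ)] (CBS k) :=
    eventuallyEq_of_mem self_mem_nhdsWithin fun y hy => (CBS_pos_eq hy).symm
  refine Tendsto.congr' hcong ?_
  rcases eq_or_lt_of_le hk with h0 | hkpos
  · subst h0
    have hc : Continuous (fun y : ℝ => Phi (-0/y + y/2) - Real.exp 0 * Phi (-0/y - y/2)) := by
      simp only [neg_zero, zero_div, zero_add, zero_sub]
      fun_prop
    have ht := (hc.tendsto 0).mono_left (nhdsWithin_le_nhds (s := Ioi (0:ℝ)))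
    simpa using ht
  · have hid : Tendsto (fun y : ℝ => y) (𝓝[>] (0:ℝ)) (𝓝 0) :=
      tendsto_nhdsWithin_of_tendsto_nhds tendsto_id
    have h1 : Tendsto (fun y : ℝ => -k/y) (𝓝[>] 0) atBot := by
      have h2 : Tendsto (fun y : ℝ => k/y) (𝓝[>] 0) atTop := by
        simp only [div_eq_mul_inv]
        exact tendsto_inv_nhdsGT_zero.const_mul_atTop hkpos
      refine (tendsto_neg_atTop_atBot.comp h2).congr fun y => ?_
      simp [Function.comp, neg_div]
    have hd1 : Tendsto (fun y : ℝ => -k/y + y/2) (𝓝[>] 0) atBot := by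
      refine tendsto_atBot_add_right_of_ge' _ (1:ℝ) h1 ?_
      filter_upwards [hid.eventually_lt_const (show (0:ℝ) < 2 by norm_num)] with y hy
      linarith
    have hd2 : Tendsto (fun y : ℝ => -k/y - y/2) (𝓝[>] 0) atBot := by
      have : Tendsto (fun y : ℝ => -k/y + -(y/2)) (𝓝[>] 0) atBot := by
        refine tendsto_atBot_add_right_of_ge' _ (0:ℝ) h1 ?_
        filter_upwards [self_mem_nhdsWithin] with y hy
        simp only [mem_Ioi] at hy; linarith
      simpa [sub_eq_add_neg] using this
    have := (tendsto_Phi_atBot.comp hd1).sub ((tendsto_Phi_atBot.comp hd2).const_mul (Real.exp k))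
    simpa using this

lemma tendsto_CBS_atTop (k : ℝ) : Tendsto (CBS k) atTop (𝓝 1) := by
  have hcong : (fun y : ℝ => Phi (-k/y + y/2) - Real.exp k * Phi (-k/y - y/2))
      =ᶠ[atTop] (CBS k) := by
    filter_upwards [eventually_gt_atTop (0:ℝ)] with y hy
    exact (CBS_pos_eq hy).symm
  refine Tendsto.congr' hcong ?_
  have h0 : Tendsto (fun y : ℝ => -k/y) atTop (𝓝 0) := Tendsto.const_div_atTop tendsto_id _
  have hhalf : Tendsto (fun y : ℝ => y/2) atTop atTop :=
    Tendsto.atTop_div_const (by norm_num) tendsto_id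
  have hd1 : Tendsto (fun y : ℝ => -k/y + y/2) atTop atTop := by
    refine tendsto_atTop_add_left_of_le' _ (-1:ℝ) ?_ hhalf
    filter_upwards [h0.eventually_const_lt (show (-1:ℝ) < 0 by norm_num)] with y hy
    linarith
  have hd2 : Tendsto (fun y : ℝ => -k/y - y/2) atTop atBot := by
    have hneg : Tendsto (fun y : ℝ => -(y/2)) atTop atBot := tendsto_neg_atTop_atBot.comp hhalf
    have : Tendsto (fun y : ℝ => -k/y + -(y/2)) atTop atBot := by
      refine tendsto_atBot_add_left_of_ge' _ (1:ℝ) ?_ hneg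
      filter_upwards [h0.eventually_lt_const (show (0:ℝ) < 1 by norm_num)] with y hy
      linarith
    simpa [sub_eq_add_neg] using this
  have := (tendsto_Phi_atTop.comp hd1).sub ((tendsto_Phi_atBot.comp hd2).const_mul (Real.exp k))
  simpa using this

lemma continuousOn_CBS {k : ℝ} (hk : 0 ≤ k) : ContinuousOn (CBS k) (Ici 0) := by
  intro y hy
  rcases eq_or_lt_of_le (mem_Ici.mp hy) with h0 | hpos
  · subst h0
    rw [ContinuousWithinAt, CBS_zero hk]
    have hsplit : 𝓝[Ici (0:ℝ)] 0 = 𝓝[{0}] 0 ⊔ 𝓝[>] 0 := by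
      rw [← nhdsWithin_union]
      congr
      ext x
      simp [le_iff_lt_or_eq, or_comm, eq_comm]
    rw [hsplit, tendsto_sup]
    constructor
    · have : Tendsto (CBS k) (pure (0:ℝ)) (𝓝 0) := by
        simpa [CBS_zero hk] using (tendsto_pure_nhds (CBS k) 0)
      exact this.mono_left (by simp [nhdsWithin_singleton])
    · exact tendsto_CBS_zero hk
  · apply ContinuousAt.continuousWithinAt
    have hev : ∀ᶠ z in 𝓝 y, CBS k z = Phi (-k/z + z/2) - Real.exp k * Phi (-k/z - z/2) := by
      filter_upwards [eventually_gt_nhds hpos] with z hz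
      exact CBS_pos_eq hz
    have hca : ContinuousAt (fun z : ℝ => Phi (-k/z + z/2) - Real.exp k * Phi (-k/z - z/2)) y := by
      have hy0 : y ≠ 0 := hpos.ne'
      fun_prop (disch := assumption)
    exact hca.congr (hev.mono fun z hz => hz.symm)

lemma PhiInv_le {u x : ℝ} (hu : 0 < u) (h : u ≤ Phi x) : PhiInv u ≤ x := by
  obtain ⟨b, hb⟩ : ∃ b, Phi b < u := (tendsto_Phi_atBot.eventually_lt_const hu).exists
  refine csInf_le ⟨b, fun z hz => ?_⟩ h
  by_contra hzb
  push_neg at hzb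
  exact absurd (le_trans hz (strictMono_Phi.monotone hzb.le)) (not_le.mpr hb)

lemma le_PhiInv {u x : ℝ} (hu : u < 1) (h : Phi x ≤ u) : x ≤ PhiInv u := by
  obtain ⟨b, hb⟩ : ∃ b, u ≤ Phi b :=
    (tendsto_Phi_atTop.eventually_const_lt hu).exists.imp fun b hb => hb.le
  refine le_csInf ⟨b, hb⟩ fun z hz => ?_
  by_contra hzx
  push_neg at hzx
  have := strictMono_Phi hzx
  simp only [mem_setOf_eq] at hz
  linarith

lemma YBS_mem {k c : ℝ} (hk : 0 ≤ k) (hc : 0 ≤ c) (hc1 : c < 1) :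
    0 ≤ YBS k c ∧ CBS k (YBS k c) = c := by
  set S := {y : ℝ | 0 ≤ y ∧ CBS k y = c} with hS
  have hne : S.Nonempty := by
    rcases eq_or_lt_of_le hc with h0 | hcpos
    · exact ⟨0, le_rfl, by rw [CBS_zero hk, ← h0]⟩
    · obtain ⟨b, hbc, hb0⟩ : ∃ b, c < CBS k b ∧ (0:ℝ) < b :=
        (((tendsto_CBS_atTop k).eventually_const_lt hc1).and (eventually_gt_atTop 0)).exists
      have hivt := intermediate_value_Icc hb0.le ((continuousOn_CBS hk).mono
        (fun z hz => le_trans (by exact hz.1) (le_refl z)))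
      have hmem : c ∈ Icc (CBS k 0) (CBS k b) := by
        rw [CBS_zero hk]
        exact ⟨hcpos.le, hbc.le⟩
      obtain ⟨y, hy, hyc⟩ := hivt hmem
      exact ⟨y, hy.1, hyc⟩
  have hclosed : IsClosed S := by
    have : S = Ici 0 ∩ CBS k ⁻¹' {c} := by
      ext z; simp [hS, mem_Ici]
    rw [this]
    exact (continuousOn_CBS hk).preimage_isClosed_of_isClosed isClosed_Ici isClosed_singleton
  have hbdd : BddBelow S := ⟨0, fun z hz => hz.1⟩
  have hmem := hclosed.csInf_mem hne hbdd
  exact ⟨hmem.1, hmem.2⟩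

theorem stmt_14 (k c : ℝ) (hk : 0 ≤ k) (hc : max (1 - Real.exp k) 0 ≤ c) (hc1 : c < 1) :
    -2 * PhiInv ((1 - c) / 2) ≤ YBS k c ∧
    YBS k c ≤ -2 * PhiInv ((1 - c) / (1 + Real.exp k)) := by
  have hexp : (1:ℝ) ≤ Real.exp k := Real.one_le_exp hk
  have hc0 : 0 ≤ c := le_trans (le_max_right _ _) hc
  obtain ⟨hy0, hyc⟩ := YBS_mem hk hc0 hc1
  set y := YBS k c with hydef
  have key1 : Phi (-(y/2)) ≤ (1-c)/2 := by
    rcases eq_or_lt_of_le hy0 with h0 | hpos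
    · have hcz : c = 0 := by rw [← hyc, ← h0, CBS_zero hk]
      rw [show -(y/2) = 0 by rw [← h0]; norm_num, Phi_zero, hcz]
      norm_num
    · have := CBS_le hk hpos
      rw [hyc] at this
      linarith
  have key2 : (1-c)/(1 + Real.exp k) ≤ Phi (-(y/2)) := by
    have hpos1 : (0:ℝ) < 1 + Real.exp k := by linarith
    rcases eq_or_lt_of_le hy0 with h0 | hpos
    · have hcz : c = 0 := by rw [← hyc, ← h0, CBS_zero hk]
      rw [show -(y/2) = 0 by rw [← h0]; norm_num, Phi_zero, hcz]
      rw [div_le_div_iff₀ hpos1 (by norm_num)]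
      linarith
    · have := le_CBS hk hpos
      rw [hyc] at this
      rw [div_le_iff₀ hpos1]
      nlinarith
  have h1c : (0:ℝ) < 1 - c := by linarith
  constructor
  · have h := le_PhiInv (u := (1-c)/2) (by linarith) key1
    linarith
  · have h := PhiInv_le (u := (1-c)/(1 + Real.exp k)) (div_pos h1c (by linarith)) key2
    linarith
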